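/- Let A be an integral domain with fraction field K, let 𝒫 be a set of prime ideals of A, and set B = ⋂_{P∈𝒫} A_P. Suppose that for every x ∈ K \ A, if (A :_A x) ⊆ ⋃_{P∈𝒫} P then (A :_A x) ⊆ P for some P ∈ 𝒫. Then B = A_S, where S = A \ ⋃_{P∈𝒫} P; in particular B is a localization of A. -/
import Mathlib


/-- The localization `A_P` of a subring `A` of a field `K` at a prime `P`,
viewed as a subset of `K`. -/
def locAt {K : Type*} [Field K] (A : Subring K) (P : Ideal A) : Set K :=
  {x : K | ∃ a s : A, s ∉ P ∧ x = (a : K) / (s : K)}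

theorem stmt6 {K : Type*} [Field K] (A : Subring K)
    (hfrac : ∀ x : K, ∃ a b : A, (b : K) ≠ 0 ∧ x = (a : K) / (b : K))
    (PP : Set (Ideal A)) (hprime : ∀ P ∈ PP, P.IsPrime)
    (hyp : ∀ x : K, x ∉ A →
      ({a : A | (a : K) * x ∈ A} ⊆ ⋃ P ∈ PP, (P : Set A)) →
      ∃ P ∈ PP, {a : A | (a : K) * x ∈ A} ⊆ (P : Set A)) :
    {x : K | ∀ P ∈ PP, x ∈ locAt A P} =
      {x : K | ∃ a s : A, (s : K) ≠ 0 ∧ (∀ P ∈ PP, s ∉ P) ∧ x = (a : K) / (s : K)} := by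
  ext x
  simp only [Set.mem_setOf_eq]
  constructor
  · intro hx
    rcases Set.eq_empty_or_nonempty PP with hPP | ⟨P0, hP0⟩
    · obtain ⟨a, b, hb, hab⟩ := hfrac x
      exact ⟨a, b, hb, fun P hP => absurd (hPP ▸ hP) (Set.notMem_empty P), hab⟩
    by_cases hxA : x ∈ A
    · refine ⟨⟨x, hxA⟩, 1, one_ne_zero, fun P hP => ?_, by simp⟩
      exact (hprime P hP).ne_top ∘ (Ideal.eq_top_iff_one P).mpr
    · -- D is not contained in the union
      have hnotsub : ¬ ({a : A | (a : K) * x ∈ A} ⊆ ⋃ P ∈ PP, (P : Set A)) := by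
        intro hsub
        obtain ⟨P, hP, hDP⟩ := hyp x hxA hsub
        obtain ⟨a, s, hsP, hxas⟩ := hx P hP
        have hs0 : (s : K) ≠ 0 := by
          intro h0
          rw [hxas, h0, div_zero] at hxA
          exact hxA A.zero_mem
        have : (s : K) * x ∈ A := by
          rw [hxas, mul_div_cancel₀ _ hs0]
          exact a.2
        exact hsP (hDP this)
      rw [Set.not_subset] at hnotsub
      obtain ⟨s, hsD, hsU⟩ := hnotsub
      simp only [Set.mem_iUnion, SetLike.mem_coe, not_exists] at hsU
      have hs0 : (s : K) ≠ 0 := by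
        intro h0
        have : s = 0 := Subtype.ext h0
        exact hsU P0 hP0 (this ▸ P0.zero_mem)
      refine ⟨⟨(s : K) * x, hsD⟩, s, hs0, fun P hP => hsU P hP, ?_⟩
      show x = (↑s * x) / ↑s; field_simp
  · rintro ⟨a, s, hs0, hsP, rfl⟩ P hP
    exact ⟨a, s, hsP P hP, rfl⟩
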